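/- Let n ≥ 2, and let B = {z ∈ ℂ : there exists a ∈ (0, 1] with z = a + 2i·a·√(1 − a²) or z = a − 2i·a·√(1 − a²)} (the boundary arcs of the teardrop domain with the corner 0 removed). Then the map Φ : {p ∈ ℝ^n : ‖p‖ = 1} × B → ℂ^n, Φ(p, z) = z·p, is injective, its range is exactly W(S^n_1) ∖ {0}, and Φ is a homeomorphism onto its range (for the subspace topologies). (The boundary evaluation of the family of holomorphic teardrops is a homeomorphism onto the Whitney sphere with its double point removed.) -/

import Mathlib

open scoped BigOperators

/-- The Whitney sphere parameterization `W : ℝ^{n+1} → ℂ^n`,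
`W(x)_j = x_j + 2i·x_0·x_j` for `1 ≤ j ≤ n`. -/
noncomputable def whitney (n : ℕ) (x : EuclideanSpace ℝ (Fin (n + 1))) : Fin n → ℂ :=
  fun j => (x j.succ : ℂ) + 2 * Complex.I * (x 0 : ℂ) * (x j.succ : ℂ)

private lemma sum_sq_of_norm_one {n : ℕ} {p : EuclideanSpace ℝ (Fin n)}
    (hp : ‖p‖ = 1) : ∑ j, p j ^ 2 = 1 := by
  have h := EuclideanSpace.norm_eq p
  rw [hp] at h
  have h2 : (∑ j, ‖p j‖ ^ 2) = 1 := Real.sqrt_eq_one.mp h.symm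
  simpa [Real.norm_eq_abs, sq_abs] using h2

private lemma norm_one_of_sum_sq {n : ℕ} {p : EuclideanSpace ℝ (Fin n)}
    (hp : ∑ j, p j ^ 2 = 1) : ‖p‖ = 1 := by
  rw [EuclideanSpace.norm_eq]
  simp only [Real.norm_eq_abs, sq_abs, hp, Real.sqrt_one]

/-- The boundary evaluation of the family of holomorphic teardrops is a homeomorphism onto the
Whitney sphere with its double point removed: with `B` the boundary arcs of the teardrop
domain minus the corner, `Φ(p, z) = z·p` is injective, has range `W(S^n_1) ∖ {0}`, and is a
topological embedding. -/
theorem stmt17 (n : ℕ) (hn : 2 ≤ n) :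
    let B : Set ℂ := {z | ∃ a : ℝ, 0 < a ∧ a ≤ 1 ∧
      (z = (a : ℂ) + 2 * Complex.I * (a : ℂ) * (Real.sqrt (1 - a ^ 2) : ℂ) ∨
        z = (a : ℂ) - 2 * Complex.I * (a : ℂ) * (Real.sqrt (1 - a ^ 2) : ℂ))}
    let Φ : Metric.sphere (0 : EuclideanSpace ℝ (Fin n)) 1 × B → Fin n → ℂ :=
      fun pz j => (pz.2 : ℂ) * ((pz.1 : EuclideanSpace ℝ (Fin n)) j : ℂ)
    Function.Injective Φ ∧
    Set.range Φ =
      (whitney n '' Metric.sphere (0 : EuclideanSpace ℝ (Fin (n + 1))) 1) \ {0} ∧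
    Topology.IsEmbedding Φ := by
  intro B Φ
  -- real part of members of B is positive
  have hBre : ∀ z : ℂ, z ∈ B → 0 < z.re := by
    rintro z ⟨a, ha0, ha1, h | h⟩ <;> subst h <;> simpa using ha0
  -- sphere members have sum of squares one
  have hsph : ∀ p : Metric.sphere (0 : EuclideanSpace ℝ (Fin n)) 1,
      ∑ j, ((p : EuclideanSpace ℝ (Fin n)) j) ^ 2 = 1 := by
    intro p
    exact sum_sq_of_norm_one (by simpa using mem_sphere_zero_iff_norm.mp p.2)
  -- a nonzero coordinate exists
  have hexj : ∀ p : Metric.sphere (0 : EuclideanSpace ℝ (Fin n)) 1,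
      ∃ j, (p : EuclideanSpace ℝ (Fin n)) j ≠ 0 := by
    intro p
    by_contra hc
    push_neg at hc
    have := hsph p
    simp [hc] at this
  -- Injectivity
  have hinj : Function.Injective Φ := by
    rintro ⟨p, z⟩ ⟨q, w⟩ h
    have h' : ∀ j, (z : ℂ) * ((p : EuclideanSpace ℝ (Fin n)) j : ℂ)
        = (w : ℂ) * ((q : EuclideanSpace ℝ (Fin n)) j : ℂ) := fun j => congrFun h j
    have hre : ∀ j, (z : ℂ).re * (p : EuclideanSpace ℝ (Fin n)) j
        = (w : ℂ).re * (q : EuclideanSpace ℝ (Fin n)) j := by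
      intro j
      have := congrArg Complex.re (h' j)
      simpa using this
    have hzpos := hBre z z.2
    have hwpos := hBre w w.2
    have hsq : (z : ℂ).re ^ 2 = (w : ℂ).re ^ 2 := by
      have e1 : ∑ j, ((z : ℂ).re * (p : EuclideanSpace ℝ (Fin n)) j) ^ 2
          = ∑ j, ((w : ℂ).re * (q : EuclideanSpace ℝ (Fin n)) j) ^ 2 := by
        exact Finset.sum_congr rfl fun j _ => by rw [hre j]
      calc (z : ℂ).re ^ 2 = (z : ℂ).re ^ 2 * ∑ j, ((p : EuclideanSpace ℝ (Fin n)) j) ^ 2 := by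
            rw [hsph p, mul_one]
        _ = ∑ j, ((z : ℂ).re * (p : EuclideanSpace ℝ (Fin n)) j) ^ 2 := by
            rw [Finset.mul_sum]; exact Finset.sum_congr rfl fun j _ => by ring
        _ = ∑ j, ((w : ℂ).re * (q : EuclideanSpace ℝ (Fin n)) j) ^ 2 := e1
        _ = (w : ℂ).re ^ 2 * ∑ j, ((q : EuclideanSpace ℝ (Fin n)) j) ^ 2 := by
            rw [Finset.mul_sum]; exact Finset.sum_congr rfl fun j _ => by ring
        _ = (w : ℂ).re ^ 2 := by rw [hsph q, mul_one]
    have hrew : (z : ℂ).re = (w : ℂ).re := by nlinarith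
    have hpq : (p : EuclideanSpace ℝ (Fin n)) = (q : EuclideanSpace ℝ (Fin n)) := by
      ext j
      have := hre j
      rw [hrew] at this
      exact mul_left_cancel₀ (ne_of_gt hwpos) this
    obtain ⟨j, hj⟩ := hexj p
    have hzw : (z : ℂ) = (w : ℂ) := by
      have := h' j
      rw [hpq] at this
      exact mul_right_cancel₀ (by rw [← hpq]; exact_mod_cast hj) this
    exact Prod.ext (Subtype.ext hpq) (Subtype.ext hzw)
  refine ⟨hinj, ?_, ?_⟩
  · -- range equality
    ext v
    constructor
    · rintro ⟨⟨p, z⟩, rfl⟩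
      obtain ⟨a, ha0, ha1, hz⟩ := z.2
      have ha2 : a ^ 2 ≤ 1 := by nlinarith
      have hs2 : Real.sqrt (1 - a ^ 2) ^ 2 = 1 - a ^ 2 := Real.sq_sqrt (by linarith)
      set s := Real.sqrt (1 - a ^ 2) with hs
      -- x0 depends on branch
      obtain ⟨x0, hx0sq, hzx0⟩ : ∃ x0 : ℝ, x0 ^ 2 = 1 - a ^ 2 ∧
          (z : ℂ) = (a : ℂ) + 2 * Complex.I * (a : ℂ) * (x0 : ℂ) := by
        rcases hz with hz | hz
        · exact ⟨s, hs2, hz⟩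
        · refine ⟨-s, by simpa using hs2, ?_⟩
          rw [hz]; push_cast; ring
      set x : EuclideanSpace ℝ (Fin (n + 1)) :=
        (WithLp.equiv 2 _).symm (Fin.cons x0 fun j => a * (p : EuclideanSpace ℝ (Fin n)) j)
        with hxdef
      have hx0 : x 0 = x0 := by
        simp [hxdef, WithLp.equiv_symm_apply, PiLp.toLp_apply]
      have hxs : ∀ j : Fin n, x j.succ = a * (p : EuclideanSpace ℝ (Fin n)) j := by
        intro j; simp [hxdef, WithLp.equiv_symm_apply, PiLp.toLp_apply]
      constructor
      · refine ⟨x, ?_, ?_⟩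
        · rw [mem_sphere_zero_iff_norm]
          apply norm_one_of_sum_sq
          rw [Fin.sum_univ_succ, hx0]
          have : ∑ j : Fin n, x j.succ ^ 2 = a ^ 2 := by
            calc ∑ j : Fin n, x j.succ ^ 2
                = a ^ 2 * ∑ j, ((p : EuclideanSpace ℝ (Fin n)) j) ^ 2 := by
                  rw [Finset.mul_sum]
                  exact Finset.sum_congr rfl fun j _ => by rw [hxs j]; ring
              _ = a ^ 2 := by rw [hsph p, mul_one]
          rw [this, hx0sq]; ring
        · funext j
          show (x j.succ : ℂ) + 2 * Complex.I * (x 0 : ℂ) * (x j.succ : ℂ)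
              = (z : ℂ) * ((p : EuclideanSpace ℝ (Fin n)) j : ℂ)
          rw [hx0, hxs j, hzx0]
          push_cast
          ring
      · -- nonzero
        simp only [Set.mem_singleton_iff]
        intro h0
        obtain ⟨j, hj⟩ := hexj p
        have := congrFun h0 j
        simp only [Pi.zero_apply] at this
        have hzne : (z : ℂ) ≠ 0 := by
          intro hz0
          have := hBre z z.2
          rw [hz0] at this
          simp at this
        exact hzne (by
          rcases mul_eq_zero.mp this with h | h
          · exact h
          · exact absurd (by exact_mod_cast h) hj)
    · rintro ⟨⟨x, hx, rfl⟩, hne⟩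
      simp only [Set.mem_singleton_iff] at hne
      have hxnorm : ∑ i, x i ^ 2 = 1 :=
        sum_sq_of_norm_one (mem_sphere_zero_iff_norm.mp hx)
      have hexj' : ∃ j : Fin n, x j.succ ≠ 0 := by
        by_contra hc
        push_neg at hc
        apply hne
        funext j
        show (x j.succ : ℂ) + 2 * Complex.I * (x 0 : ℂ) * (x j.succ : ℂ) = 0
        rw [hc j]
        simp
      obtain ⟨j0, hj0⟩ := hexj'
      set a := Real.sqrt (∑ j : Fin n, x j.succ ^ 2) with ha
      have hsumnn : (0:ℝ) ≤ ∑ j : Fin n, x j.succ ^ 2 :=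
        Finset.sum_nonneg fun _ _ => sq_nonneg _
      have hsumpos : (0:ℝ) < ∑ j : Fin n, x j.succ ^ 2 :=
        Finset.sum_pos' (fun _ _ => sq_nonneg _)
          ⟨j0, Finset.mem_univ _, by positivity⟩
      have ha0 : 0 < a := Real.sqrt_pos.mpr hsumpos
      have ha2 : a ^ 2 = ∑ j : Fin n, x j.succ ^ 2 := Real.sq_sqrt hsumnn
      have hsplit : x 0 ^ 2 + ∑ j : Fin n, x j.succ ^ 2 = 1 := by
        rw [← hxnorm, Fin.sum_univ_succ]
      have ha2' : a ^ 2 = 1 - x 0 ^ 2 := by rw [ha2]; linarith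
      have ha1 : a ≤ 1 := by nlinarith [sq_nonneg (x 0)]
      have hsx : Real.sqrt (1 - a ^ 2) = |x 0| := by
        rw [ha2']
        have : (1:ℝ) - (1 - x 0 ^ 2) = x 0 ^ 2 := by ring
        rw [this, Real.sqrt_sq_eq_abs]
      set p : EuclideanSpace ℝ (Fin n) :=
        (WithLp.equiv 2 _).symm (fun j => x j.succ / a) with hpdef
      have hpa : ∀ j, p j = x j.succ / a := by
        intro j; simp [hpdef, WithLp.equiv_symm_apply, PiLp.toLp_apply]
      have hpsum : ∑ j, p j ^ 2 = 1 := by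
        have : ∑ j, p j ^ 2 = (∑ j : Fin n, x j.succ ^ 2) / a ^ 2 := by
          rw [Finset.sum_div]
          exact Finset.sum_congr rfl fun j _ => by rw [hpa j]; ring
        rw [this, ← ha2, div_self (by positivity)]
      have hpmem : p ∈ Metric.sphere (0 : EuclideanSpace ℝ (Fin n)) 1 :=
        mem_sphere_zero_iff_norm.mpr (norm_one_of_sum_sq hpsum)
      set z : ℂ := (a : ℂ) + 2 * Complex.I * (a : ℂ) * ((x 0 : ℝ) : ℂ) with hzdef
      have hzB : z ∈ B := by
        rcases le_or_gt 0 (x 0) with h0 | h0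
        · refine ⟨a, ha0, ha1, Or.inl ?_⟩
          rw [hsx, abs_of_nonneg h0]
        · refine ⟨a, ha0, ha1, Or.inr ?_⟩
          rw [hsx, abs_of_neg h0, hzdef]
          push_cast
          ring
      refine ⟨(⟨p, hpmem⟩, ⟨z, hzB⟩), ?_⟩
      funext j
      show z * ((p j : ℝ) : ℂ) = (x j.succ : ℂ) + 2 * Complex.I * (x 0 : ℂ) * (x j.succ : ℂ)
      rw [hpa j, hzdef]
      have hane : ((a : ℝ) : ℂ) ≠ 0 := by exact_mod_cast ne_of_gt ha0
      push_cast
      field_simp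
  · -- Embedding
    classical
    have hΦcont : Continuous Φ := by
      apply continuous_pi
      intro j
      refine Continuous.mul (continuous_subtype_val.comp continuous_snd) ?_
      exact Complex.continuous_ofReal.comp
        (((EuclideanSpace.proj j : EuclideanSpace ℝ (Fin n) →L[ℝ] ℝ).continuous).comp
          (continuous_subtype_val.comp continuous_fst))
    set r : (Fin n → ℂ) → ℝ := fun v => Real.sqrt (∑ j, (v j).re ^ 2) with hrdef
    have hsumc : Continuous fun v : Fin n → ℂ => ∑ j, (v j).re ^ 2 :=
      continuous_finset_sum _ fun j _ =>
        (Complex.continuous_re.comp (continuous_apply j)).pow 2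
    have hrc : Continuous r := Real.continuous_sqrt.comp hsumc
    set U : Set (Fin n → ℂ) := {v | 0 < ∑ j, (v j).re ^ 2} with hUdef
    have hreΦ : ∀ (p : Metric.sphere (0 : EuclideanSpace ℝ (Fin n)) 1) (z : B) (j : Fin n),
        ((Φ (p, z)) j).re = (z : ℂ).re * (p : EuclideanSpace ℝ (Fin n)) j := by
      intro p z j
      show ((z : ℂ) * (((p : EuclideanSpace ℝ (Fin n)) j : ℝ) : ℂ)).re = _
      simp
    have himΦ : ∀ (p : Metric.sphere (0 : EuclideanSpace ℝ (Fin n)) 1) (z : B) (j : Fin n),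
        ((Φ (p, z)) j).im = (z : ℂ).im * (p : EuclideanSpace ℝ (Fin n)) j := by
      intro p z j
      show ((z : ℂ) * (((p : EuclideanSpace ℝ (Fin n)) j : ℝ) : ℂ)).im = _
      simp
    have hsumΦ : ∀ (p : Metric.sphere (0 : EuclideanSpace ℝ (Fin n)) 1) (z : B),
        ∑ j, ((Φ (p, z)) j).re ^ 2 = (z : ℂ).re ^ 2 := by
      intro p z
      calc ∑ j, ((Φ (p, z)) j).re ^ 2
          = (z : ℂ).re ^ 2 * ∑ j, ((p : EuclideanSpace ℝ (Fin n)) j) ^ 2 := by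
            rw [Finset.mul_sum]
            exact Finset.sum_congr rfl fun j _ => by rw [hreΦ p z j]; ring
        _ = (z : ℂ).re ^ 2 := by rw [hsph p, mul_one]
    have hmemU : ∀ pz, Φ pz ∈ U := by
      rintro ⟨p, z⟩
      show 0 < ∑ j, ((Φ (p, z)) j).re ^ 2
      rw [hsumΦ p z]
      exact pow_pos (hBre z z.2) 2
    set Φ' : Metric.sphere (0 : EuclideanSpace ℝ (Fin n)) 1 × B → U :=
      fun pz => ⟨Φ pz, hmemU pz⟩ with hΦ'def
    have hΦ'cont : Continuous Φ' := hΦcont.subtype_mk _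
    set g : U → EuclideanSpace ℝ (Fin n) × ℂ := fun v =>
      ((WithLp.equiv 2 _).symm (fun j => ((v : Fin n → ℂ) j).re / r v),
        ((r v : ℝ) : ℂ) +
          (((∑ j, ((v : Fin n → ℂ) j).im * ((v : Fin n → ℂ) j).re) / r v : ℝ) : ℂ) * Complex.I)
      with hgdef
    have hrpos : ∀ v : U, 0 < r (v : Fin n → ℂ) := fun v => Real.sqrt_pos.mpr v.2
    have hgc : Continuous g := by
      apply Continuous.prodMk
      · refine (PiLp.continuous_toLp 2 _).comp (continuous_pi fun j => ?_)
        exact Continuous.div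
          (Complex.continuous_re.comp ((continuous_apply j).comp continuous_subtype_val))
          (hrc.comp continuous_subtype_val) fun v => ne_of_gt (hrpos v)
      · refine Continuous.add (Complex.continuous_ofReal.comp (hrc.comp continuous_subtype_val)) ?_
        refine Continuous.mul (Complex.continuous_ofReal.comp ?_) continuous_const
        refine Continuous.div ?_ (hrc.comp continuous_subtype_val) fun v => ne_of_gt (hrpos v)
        exact (continuous_finset_sum _ fun j _ =>
          ((Complex.continuous_im.comp (continuous_apply j)).mul
            (Complex.continuous_re.comp (continuous_apply j)))).comp continuous_subtype_val
    have hcomp : g ∘ Φ' = fun pz : Metric.sphere (0 : EuclideanSpace ℝ (Fin n)) 1 × B =>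
        ((pz.1 : EuclideanSpace ℝ (Fin n)), (pz.2 : ℂ)) := by
      funext pz
      obtain ⟨p, z⟩ := pz
      have hzpos := hBre z z.2
      have hrΦ : r (Φ (p, z)) = (z : ℂ).re := by
        rw [hrdef]
        simp only
        rw [hsumΦ p z, Real.sqrt_sq (le_of_lt hzpos)]
      have h1 : ((g ∘ Φ') (p, z)).1 = (p : EuclideanSpace ℝ (Fin n)) := by
        show (WithLp.equiv 2 _).symm (fun j => ((Φ (p, z)) j).re / r (Φ (p, z)))
            = (p : EuclideanSpace ℝ (Fin n))
        ext j
        rw [WithLp.equiv_symm_apply, PiLp.toLp_apply]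
        rw [hreΦ p z j, hrΦ]
        exact mul_div_cancel_left₀ _ (ne_of_gt hzpos)
      have h2 : ((g ∘ Φ') (p, z)).2 = (z : ℂ) := by
        show ((r (Φ (p, z)) : ℝ) : ℂ) +
            (((∑ j, ((Φ (p, z)) j).im * ((Φ (p, z)) j).re) / r (Φ (p, z)) : ℝ) : ℂ) * Complex.I
            = (z : ℂ)
        have hsumim : ∑ j, ((Φ (p, z)) j).im * ((Φ (p, z)) j).re
            = (z : ℂ).im * (z : ℂ).re := by
          calc ∑ j, ((Φ (p, z)) j).im * ((Φ (p, z)) j).re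
              = ((z : ℂ).im * (z : ℂ).re) * ∑ j, ((p : EuclideanSpace ℝ (Fin n)) j) ^ 2 := by
                rw [Finset.mul_sum]
                exact Finset.sum_congr rfl fun j _ => by
                  rw [himΦ p z j, hreΦ p z j]; ring
            _ = (z : ℂ).im * (z : ℂ).re := by rw [hsph p, mul_one]
        rw [hrΦ, hsumim, mul_div_assoc, div_self (ne_of_gt hzpos), mul_one]
        exact Complex.re_add_im (z : ℂ)
      calc (g ∘ Φ') (p, z) = (((g ∘ Φ') (p, z)).1, ((g ∘ Φ') (p, z)).2) := rfl
        _ = ((p : EuclideanSpace ℝ (Fin n)), (z : ℂ)) := by rw [h1, h2]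
    have hθ : Topology.IsEmbedding
        (fun pz : Metric.sphere (0 : EuclideanSpace ℝ (Fin n)) 1 × B =>
          ((pz.1 : EuclideanSpace ℝ (Fin n)), (pz.2 : ℂ))) := by
      have : (fun pz : Metric.sphere (0 : EuclideanSpace ℝ (Fin n)) 1 × B =>
          ((pz.1 : EuclideanSpace ℝ (Fin n)), (pz.2 : ℂ)))
          = Prod.map (Subtype.val) (Subtype.val) := rfl
      rw [this]
      exact Topology.IsEmbedding.subtypeVal.prodMap Topology.IsEmbedding.subtypeVal
    have hgΦ' : Topology.IsEmbedding (g ∘ Φ') := by rw [hcomp]; exact hθ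
    have hΦ'emb : Topology.IsEmbedding Φ' :=
      Topology.IsEmbedding.of_comp hΦ'cont hgc hgΦ'
    have hfac : Φ = Subtype.val ∘ Φ' := rfl
    rw [hfac]
    exact Topology.IsEmbedding.subtypeVal.comp hΦ'emb
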